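/- Fix an integer d ≥ 1 and a complex number q with q ≠ 0 and q ≠ 1. Define p_0 = q^{−d}, p_k = q^{−d+k−1}(q − 1) for k = 1,...,d, let P = P̃ = diag(p_0, p_1, ..., p_d), and let U = (u_{i,j})_{0≤i,j≤d} be given by u_{i,j} = 1 when i + j ≤ d, u_{i,j} = 1/(1 − q) when i + j = d + 1, and u_{i,j} = 0 when i + j > d + 1. Then with ν = 1/p_0 = q^d one has ν P U P̃ Uᵗ = I_{d+1}, i.e. (ν, P, P̃, U) ∈ K_d. -/

import Mathlib

open Matrix Finset

theorem stmt_19 (d : ℕ) (hd : 1 ≤ d) (q : ℂ) (hq0 : q ≠ 0) (hq1 : q ≠ 1)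
    (p : Fin (d+1) → ℂ)
    (hp0 : p 0 = q ^ (-(d : ℤ)))
    (hpk : ∀ k : Fin (d+1), (k : ℕ) ≠ 0 →
      p k = q ^ (-(d : ℤ) + (k : ℕ) - 1) * (q - 1))
    (U : Matrix (Fin (d+1)) (Fin (d+1)) ℂ)
    (hU : ∀ i j : Fin (d+1), U i j =
      if (i : ℕ) + (j : ℕ) ≤ d then 1
      else if (i : ℕ) + (j : ℕ) = d + 1 then (1 - q)⁻¹
      else 0)
    (ν : ℂ) (hν : ν = q ^ (d : ℕ)) :
    ν = 1 / p 0 ∧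
      ν • (Matrix.diagonal p * U * Matrix.diagonal p * U.transpose) = 1 := by
  have hq1' : q - 1 ≠ 0 := sub_ne_zero.mpr hq1
  have hq1'' : (1 : ℂ) - q ≠ 0 := sub_ne_zero.mpr (Ne.symm hq1)
  -- nat-indexed versions
  set p' : ℕ → ℂ := fun k => if h : k < d + 1 then p ⟨k, h⟩ else 0 with hp'def
  set u : ℕ → ℕ → ℂ := fun i k =>
    if i + k ≤ d then 1 else if i + k = d + 1 then (1 - q)⁻¹ else 0 with hudef
  have hu_le : ∀ i k : ℕ, i + k ≤ d → u i k = 1 := by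
    intro i k h
    simp only [hudef]
    rw [if_pos h]
  have hu_eq : ∀ i k : ℕ, i + k = d + 1 → u i k = (1 - q)⁻¹ := by
    intro i k h
    simp only [hudef]
    rw [if_neg (by omega), if_pos h]
  have hp'0 : p' 0 = q ^ (-(d : ℤ)) := by
    simp only [hp'def, dif_pos (Nat.succ_pos d)]
    exact hp0
  have hp'k : ∀ k : ℕ, 1 ≤ k → k ≤ d → p' k = q ^ (-(d : ℤ) + k - 1) * (q - 1) := by
    intro k hk1 hkd
    have h : k < d + 1 := by omega
    simp only [hp'def, dif_pos h]
    have := hpk ⟨k, h⟩ (by simpa using Nat.one_le_iff_ne_zero.mp hk1)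
    simpa using this
  have sumP : ∀ m : ℕ, m ≤ d → ∑ k ∈ range (m + 1), p' k = q ^ ((m : ℤ) - d) := by
    intro m hm
    induction m with
    | zero => simpa using hp'0
    | succ n ih =>
      rw [Finset.sum_range_succ, ih (by omega), hp'k (n + 1) (by omega) hm]
      have h1 : (-(d : ℤ) + ((n + 1 : ℕ) : ℤ) - 1) = (n : ℤ) - d := by push_cast; ring
      have h2 : (((n + 1 : ℕ)) : ℤ) - d = ((n : ℤ) - d) + 1 := by push_cast; ring
      rw [h1, h2, zpow_add₀ hq0, zpow_one]
      ring
  -- split lemma for 1 ≤ j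
  have hsplit : ∀ i j : ℕ, 1 ≤ j → j ≤ d → i ≤ j →
      ∑ k ∈ range (d + 1), p' k * u i k * u j k
        = q ^ (-(j : ℤ)) + q ^ (-(j : ℤ)) * (q - 1) * (u i (d - j + 1) * (1 - q)⁻¹) := by
    intro i j hj1 hjd hij
    have hsub : range (d - j + 2) ⊆ range (d + 1) := by
      apply Finset.range_subset_range.mpr; omega
    rw [← Finset.sum_subset hsub]
    · rw [Finset.sum_range_succ]
      have h1 : ∑ k ∈ range (d - j + 1), p' k * u i k * u j k
          = ∑ k ∈ range (d - j + 1), p' k := by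
        apply Finset.sum_congr rfl
        intro k hk
        rw [Finset.mem_range] at hk
        rw [hu_le i k (by omega), hu_le j k (by omega)]
        ring
      have hc : ((d - j : ℕ) : ℤ) - d = -(j : ℤ) := by
        have h3 : ((d - j : ℕ) : ℤ) = (d : ℤ) - j := by
          push_cast [Nat.cast_sub hjd]; ring
        omega
      have hp'v : p' (d - j + 1) = q ^ (-(j : ℤ)) * (q - 1) := by
        rw [hp'k (d - j + 1) (by omega) (by omega)]
        congr 2
        push_cast [Nat.cast_sub hjd]
        ring
      rw [h1, sumP (d - j) (by omega), hc, hp'v, hu_eq j (d - j + 1) (by omega)]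
      ring
    · intro k hk hk2
      rw [Finset.mem_range] at hk
      rw [Finset.mem_range, not_lt] at hk2
      have h1 : ¬ (j + k ≤ d) := by omega
      have h2 : ¬ (j + k = d + 1) := by omega
      simp only [hudef]
      rw [if_neg h1, if_neg h2]
      ring
  have hvkey : (q - 1) * (1 - q)⁻¹ = -1 := by
    rw [show q - 1 = -(1 - q) by ring, neg_mul, mul_inv_cancel₀ hq1'']
  -- off-diagonal vanishing
  have Snn : ∀ i j : ℕ, i < j → j ≤ d →
      ∑ k ∈ range (d + 1), p' k * u i k * u j k = 0 := by
    intro i j hij hjd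
    rw [hsplit i j (by omega) hjd (le_of_lt hij), hu_le i (d - j + 1) (by omega)]
    linear_combination (q ^ (-(j : ℤ))) * hvkey
  -- diagonal
  have Sdd : ∀ j : ℕ, j ≤ d →
      ν * (p' j * ∑ k ∈ range (d + 1), p' k * u j k * u j k) = 1 := by
    intro j hjd
    rcases Nat.eq_zero_or_pos j with hj0 | hj1
    · subst hj0
      have h1 : ∑ k ∈ range (d + 1), p' k * u 0 k * u 0 k
          = ∑ k ∈ range (d + 1), p' k := by
        apply Finset.sum_congr rfl
        intro k hk
        rw [Finset.mem_range] at hk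
        rw [hu_le 0 k (by omega)]
        ring
      rw [h1, sumP d le_rfl, hp'0, hν,
        show ((d : ℤ) - d) = 0 by ring, zpow_zero, mul_one,
        ← zpow_natCast q d, ← zpow_add₀ hq0,
        show ((d : ℤ) + -(d : ℤ)) = 0 by ring, zpow_zero]
    · rw [hsplit j j hj1 hjd le_rfl, hu_eq j (d - j + 1) (by omega),
        hp'k j hj1 hjd, hν]
      have key : q ^ (d : ℕ) * (q ^ (-(d : ℤ) + (j : ℕ) - 1) * q ^ (-(j : ℤ))) * q = 1 := by
        rw [← zpow_natCast q d, ← zpow_add₀ hq0, ← zpow_add₀ hq0,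
          show ((d : ℤ) + (-(d : ℤ) + (j : ℕ) - 1 + -(j : ℤ))) = -1 by push_cast; ring,
          _root_.zpow_neg_one]
        exact inv_mul_cancel₀ hq0
      have expand : ∀ c : ℂ, c + c * (q - 1) * ((1 - q)⁻¹ * (1 - q)⁻¹)
          = c * q * (q - 1)⁻¹ := by
        intro c
        field_simp
        ring
      rw [expand]
      linear_combination ((q - 1) * (q - 1)⁻¹) * key + mul_inv_cancel₀ hq1'
  -- entries
  have entry : ∀ i j : Fin (d + 1),
      (Matrix.diagonal p * U * Matrix.diagonal p * U.transpose) i j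
        = p' (i : ℕ) * ∑ k ∈ range (d + 1), p' k * u (i : ℕ) k * u (j : ℕ) k := by
    intro i j
    rw [Matrix.mul_apply, Finset.mul_sum,
      ← Fin.sum_univ_eq_sum_range (fun k => p' (i : ℕ) * (p' k * u (i : ℕ) k * u (j : ℕ) k)) (d + 1)]
    apply Finset.sum_congr rfl
    intro k _
    rw [Matrix.mul_diagonal, Matrix.diagonal_mul, Matrix.transpose_apply, hU i k, hU j k]
    have hpi : p' (i : ℕ) = p i := by simp [hp'def, i.isLt, not_lt.mpr (Fin.is_le i)]
    have hpk' : p' (k : ℕ) = p k := by simp [hp'def, k.isLt, not_lt.mpr (Fin.is_le k)]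
    rw [hpi, hpk']
    simp only [hudef]
    ring
  constructor
  · rw [hν, hp0, one_div, ← _root_.zpow_neg, neg_neg, zpow_natCast]
  · ext i j
    rw [Matrix.smul_apply, entry i j, Matrix.one_apply, smul_eq_mul]
    rcases lt_trichotomy (i : ℕ) (j : ℕ) with h | h | h
    · rw [if_neg (by simp only [Fin.ext_iff]; omega)]
      rw [Snn (i : ℕ) (j : ℕ) h (by omega)]
      ring
    · rw [if_pos (Fin.ext h)]
      rw [show (j : ℕ) = (i : ℕ) from h.symm]
      exact Sdd (i : ℕ) (by omega)
    · rw [if_neg (by simp only [Fin.ext_iff]; omega)]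
      have hsym : ∑ k ∈ range (d + 1), p' k * u (i : ℕ) k * u (j : ℕ) k
          = ∑ k ∈ range (d + 1), p' k * u (j : ℕ) k * u (i : ℕ) k := by
        apply Finset.sum_congr rfl; intro k _; ring
      rw [hsym, Snn (j : ℕ) (i : ℕ) h (by omega)]
      ring
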